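/- Consider the chain complexes of abelian groups: A with A_1 = A_0 = ℤ and differential multiplication by 16; B with B_2 = ℤ, B_1 = ℤ ⊕ ℤ, B_0 = ℤ, differentials ∂_2(u) = (16u, 0) and ∂_1(v,w) = 8w; C with C_2 = C_1 = ℤ and differential multiplication by 16; D with D_2 = D_1 = ℤ and differential multiplication by 16 (all other terms 0). Let f : A → B have f_1(a) = (a, 2a) and f_0 = 1; let g : B → C have g_2 = 8 and g_1(v,w) = 8v + 4w; let h : C → D have h_2 = 2 and h_1 = 2. Then f, g, h are chain maps, g∘f and h∘g are nullhomotopic, and for EVERY nullhomotopy S of g∘f and EVERY nullhomotopy T of h∘g, the Toda map φ(S,T) : ΣA → D is not chain homotopic to zero. (Hence the Toda bracket ⟨h,g,f⟩ does not vanish.) -/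

import Mathlib

/-! STATEMENT 19.  Chain complexes of abelian groups are encoded as families
`M r : ℤ → Type`, `(M r) m = Fin (r m) → ℤ` (so `ℤ^{r m}` in degree `m`), with
differentials `d m : (M r) (m+1) →ₗ[ℤ] (M r) m` given by integer matrices.  Here
`B` has `B₂ = ℤ`, `B₁ = ℤ ⊕ ℤ`, `B₀ = ℤ`, with `∂₂ u = (16u, 0)` and
`∂₁ (v,w) = 8w`. -/

abbrev M (r : ℤ → ℕ) (m : ℤ) : Type := Fin (r m) → ℤ

/-- A has ℤ in degrees 0 and 1 -/
def rA : ℤ → ℕ := fun m => if m = 0 ∨ m = 1 then 1 else 0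
/-- B has ℤ in degrees 0 and 2, and ℤ ⊕ ℤ in degree 1 -/
def rB : ℤ → ℕ := fun m => if m = 1 then 2 else if m = 0 ∨ m = 2 then 1 else 0
/-- C has ℤ in degrees 1 and 2 -/
def rC : ℤ → ℕ := fun m => if m = 1 ∨ m = 2 then 1 else 0
/-- D has ℤ in degrees 1 and 2 -/
def rD : ℤ → ℕ := fun m => if m = 1 ∨ m = 2 then 1 else 0

/-- A = (ℤ --16--> ℤ) in degrees 1 → 0 -/
noncomputable def dA (m : ℤ) : M rA (m+1) →ₗ[ℤ] M rA m :=
  Matrix.mulVecLin (Matrix.of fun _ _ => if m = 0 then (16:ℤ) else 0)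

/-- B: `∂₂ u = (16u, 0) : B₂ → B₁` and `∂₁ (v,w) = 8w : B₁ → B₀` -/
noncomputable def dB (m : ℤ) : M rB (m+1) →ₗ[ℤ] M rB m :=
  Matrix.mulVecLin (Matrix.of fun i j =>
    if m = 1 then (if (i : ℕ) = 0 then (16:ℤ) else 0)
    else if m = 0 then (if (j : ℕ) = 1 then 8 else 0)
    else 0)

/-- C = (ℤ --16--> ℤ) in degrees 2 → 1 -/
noncomputable def dC (m : ℤ) : M rC (m+1) →ₗ[ℤ] M rC m :=
  Matrix.mulVecLin (Matrix.of fun _ _ => if m = 1 then (16:ℤ) else 0)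

/-- D = (ℤ --16--> ℤ) in degrees 2 → 1 -/
noncomputable def dD (m : ℤ) : M rD (m+1) →ₗ[ℤ] M rD m :=
  Matrix.mulVecLin (Matrix.of fun _ _ => if m = 1 then (16:ℤ) else 0)

/-- f : A → B with f₁ a = (a, 2a) and f₀ = 1 -/
noncomputable def fm (m : ℤ) : M rA m →ₗ[ℤ] M rB m :=
  Matrix.mulVecLin (Matrix.of fun i _ =>
    if m = 1 then (if (i : ℕ) = 0 then (1:ℤ) else 2)
    else if m = 0 then 1
    else 0)

/-- g : B → C with g₂ = 8 and g₁ (v,w) = 8v + 4w -/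
noncomputable def gm (m : ℤ) : M rB m →ₗ[ℤ] M rC m :=
  Matrix.mulVecLin (Matrix.of fun _ j =>
    if m = 2 then (8:ℤ)
    else if m = 1 then (if (j : ℕ) = 0 then 8 else 4)
    else 0)

/-- h : C → D with h₂ = 2 and h₁ = 2 -/
noncomputable def hm (m : ℤ) : M rC m →ₗ[ℤ] M rD m :=
  Matrix.mulVecLin (Matrix.of fun _ _ => if m = 2 ∨ m = 1 then (2:ℤ) else 0)

noncomputable def Sw (t : ℤ) : M rA t →ₗ[ℤ] M rC (t+1) :=
  Matrix.mulVecLin (Matrix.of fun _ _ => if t = 1 then (1:ℤ) else 0)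

noncomputable def Tw (t : ℤ) : M rB t →ₗ[ℤ] M rD (t+1) :=
  Matrix.mulVecLin (Matrix.of fun _ j =>
    if t = 1 then (if (j : ℕ) = 0 then (1:ℤ) else 0) else if t = 0 then 1 else 0)


def vB2 : M rB (0+1+1) := fun _ => 1
def vA1 : M rA (0+1) := fun _ => 1
def vA0 : M rA 0 := fun _ => 1
def bb0 : M rB (0+1) := fun j => if (j:ℕ) = 0 then 1 else 0
def bb1 : M rB (0+1) := fun j => if (j:ℕ) = 0 then 0 else 1

theorem statement19 :
    -- the four graded objects are chain complexes:
    (∀ m : ℤ, (dA m).comp (dA (m+1)) = 0) ∧ (∀ m : ℤ, (dB m).comp (dB (m+1)) = 0) ∧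
    (∀ m : ℤ, (dC m).comp (dC (m+1)) = 0) ∧ (∀ m : ℤ, (dD m).comp (dD (m+1)) = 0) ∧
    -- f, g, h are chain maps:
    (∀ m : ℤ, (dB m).comp (fm (m+1)) = (fm m).comp (dA m)) ∧
    (∀ m : ℤ, (dC m).comp (gm (m+1)) = (gm m).comp (dB m)) ∧
    (∀ m : ℤ, (dD m).comp (hm (m+1)) = (hm m).comp (dC m)) ∧
    -- g∘f is nullhomotopic:
    (∃ S : ∀ t : ℤ, M rA t →ₗ[ℤ] M rC (t+1),
      ∀ t : ℤ, (gm (t+1)).comp (fm (t+1)) = (dC (t+1)).comp (S (t+1)) + (S t).comp (dA t)) ∧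
    -- h∘g is nullhomotopic:
    (∃ T : ∀ t : ℤ, M rB t →ₗ[ℤ] M rD (t+1),
      ∀ t : ℤ, (hm (t+1)).comp (gm (t+1)) = (dD (t+1)).comp (T (t+1)) + (T t).comp (dB t)) ∧
    -- for EVERY such S and T, the Toda map φ(S,T) : ΣA → D, with components
    -- φ out of (ΣA)_{t+1} = A_t given by h∘S − T∘f, is not chain homotopic to zero
    -- (the suspension differential being −∂_A):
    (∀ (S : ∀ t : ℤ, M rA t →ₗ[ℤ] M rC (t+1)) (T : ∀ t : ℤ, M rB t →ₗ[ℤ] M rD (t+1)),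
      (∀ t : ℤ, (gm (t+1)).comp (fm (t+1)) = (dC (t+1)).comp (S (t+1)) + (S t).comp (dA t)) →
      (∀ t : ℤ, (hm (t+1)).comp (gm (t+1)) = (dD (t+1)).comp (T (t+1)) + (T t).comp (dB t)) →
      ¬ ∃ U : ∀ t : ℤ, M rA t →ₗ[ℤ] M rD (t+1+1),
          ∀ t : ℤ, (hm (t+1+1)).comp (S (t+1)) - (T (t+1)).comp (fm (t+1))
            = (dD (t+1+1)).comp (U (t+1)) - (U t).comp (dA t)) := by
  refine ⟨?_, ?_, ?_, ?_, ?_, ?_, ?_, ⟨Sw, ?_⟩, ⟨Tw, ?_⟩, ?_⟩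
  · -- dA chain complex
      intro m
      rw [dA, dA, ← Matrix.mulVecLin_mul,
        show (0 : M rA (m+1+1) →ₗ[ℤ] M rA m) = Matrix.mulVecLin 0 from (Matrix.mulVecLin_zero ..).symm]
      congr 1
      by_cases c0 : m = 0; · subst c0; decide
      by_cases c1 : m = 1; · subst c1; decide
      by_cases cm1 : m = -1; · subst cm1; decide
      ext i j
      simp [Matrix.mul_apply, c0, c1, cm1, show m+1 ≠ 0 by omega]
  · -- dB chain complex
      intro m
      rw [dB, dB, ← Matrix.mulVecLin_mul,
        show (0 : M rB (m+1+1) →ₗ[ℤ] M rB m) = Matrix.mulVecLin 0 from (Matrix.mulVecLin_zero ..).symm]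
      congr 1
      by_cases c0 : m = 0; · subst c0; decide
      by_cases c1 : m = 1; · subst c1; decide
      by_cases c2 : m = 2; · subst c2; decide
      by_cases cm1 : m = -1; · subst cm1; decide
      by_cases cm2 : m = -2; · subst cm2; decide
      ext i j
      simp [Matrix.mul_apply, c0, c1, c2, cm1, cm2,
        show m+1 ≠ 0 by omega, show m+1 ≠ 1 by omega, show m+1 ≠ 2 by omega]
  · -- dC chain complex
      intro m
      rw [dC, dC, ← Matrix.mulVecLin_mul,
        show (0 : M rC (m+1+1) →ₗ[ℤ] M rC m) = Matrix.mulVecLin 0 from (Matrix.mulVecLin_zero ..).symm]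
      congr 1
      by_cases c0 : m = 0; · subst c0; decide
      by_cases c1 : m = 1; · subst c1; decide
      by_cases c2 : m = 2; · subst c2; decide
      ext i j
      simp [Matrix.mul_apply, c0, c1, c2, show m+1 ≠ 1 by omega]
  · -- dD chain complex (same as dC)
      intro m
      rw [dD, dD, ← Matrix.mulVecLin_mul,
        show (0 : M rD (m+1+1) →ₗ[ℤ] M rD m) = Matrix.mulVecLin 0 from (Matrix.mulVecLin_zero ..).symm]
      congr 1
      by_cases c0 : m = 0; · subst c0; decide
      by_cases c1 : m = 1; · subst c1; decide
      by_cases c2 : m = 2; · subst c2; decide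
      ext i j
      simp [Matrix.mul_apply, c0, c1, c2, show m+1 ≠ 1 by omega]
  · -- f chain map
      intro m
      rw [dB, fm, fm, dA, ← Matrix.mulVecLin_mul, ← Matrix.mulVecLin_mul]
      congr 1
      by_cases c0 : m = 0; · subst c0; decide
      by_cases c1 : m = 1; · subst c1; decide
      by_cases cm1 : m = -1; · subst cm1; decide
      ext i j
      simp [Matrix.mul_apply, c0, c1, cm1,
        show m+1 ≠ 0 by omega, show m+1 ≠ 1 by omega]
  · -- g chain map
      intro m
      rw [dC, gm, gm, dB, ← Matrix.mulVecLin_mul, ← Matrix.mulVecLin_mul]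
      congr 1
      by_cases c0 : m = 0; · subst c0; decide
      by_cases c1 : m = 1; · subst c1; decide
      by_cases c2 : m = 2; · subst c2; decide
      ext i j
      simp [Matrix.mul_apply, c0, c1, c2,
        show m+1 ≠ 1 by omega, show m+1 ≠ 2 by omega]
  · -- h chain map
      intro m
      rw [dD, hm, hm, dC, ← Matrix.mulVecLin_mul, ← Matrix.mulVecLin_mul]
      congr 1
      by_cases c0 : m = 0; · subst c0; decide
      by_cases c1 : m = 1; · subst c1; decide
      by_cases c2 : m = 2; · subst c2; decide
      ext i j
      simp [Matrix.mul_apply, c0, c1, c2,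
        show m+1 ≠ 1 by omega, show m+1 ≠ 2 by omega]
  · -- S nullhomotopy
      intro t
      rw [gm, fm, dC, Sw, Sw, dA, ← Matrix.mulVecLin_mul, ← Matrix.mulVecLin_mul,
        ← Matrix.mulVecLin_mul, ← Matrix.mulVecLin_add]
      congr 1
      by_cases c0 : t = 0; · subst c0; decide
      by_cases c1 : t = 1; · subst c1; decide
      by_cases cm1 : t = -1; · subst cm1; decide
      ext i j
      simp [Matrix.mul_apply, c0, c1, cm1,
        show t+1 ≠ 0 by omega, show t+1 ≠ 1 by omega, show t+1 ≠ 2 by omega]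
  · -- T nullhomotopy
      intro t
      rw [hm, gm, dD, Tw, Tw, dB, ← Matrix.mulVecLin_mul, ← Matrix.mulVecLin_mul,
        ← Matrix.mulVecLin_mul, ← Matrix.mulVecLin_add]
      congr 1
      by_cases c0 : t = 0; · subst c0; decide
      by_cases c1 : t = 1; · subst c1; decide
      by_cases cm1 : t = -1; · subst cm1; decide
      by_cases c2 : t = 2; · subst c2; decide
      ext i j
      simp [Matrix.mul_apply, c0, c1, c2, cm1,
        show t+1 ≠ 0 by omega, show t+1 ≠ 1 by omega, show t+1 ≠ 2 by omega]
  · -- Toda map never nullhomotopic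
      intro S T hS hT
      rintro ⟨U, hU⟩
      have j0 : Fin (rD (0+1+1)) := ⟨0, by norm_num [rD]⟩
      have e1 : dB (0+1) vB2 = (16:ℤ) • bb0 := by
        funext j
        simp only [dB, Matrix.mulVecLin_apply, Matrix.mulVec, dotProduct, Matrix.of_apply,
          Pi.smul_apply, smul_eq_mul]
        by_cases hj : (j:ℕ) = 0 <;> simp [vB2, bb0, hj, rB] <;> decide
      have e2 : fm (0+1) vA1 = bb0 + (2:ℤ) • bb1 := by
        funext j
        simp only [fm, Matrix.mulVecLin_apply, Matrix.mulVec, dotProduct, Matrix.of_apply,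
          Pi.add_apply, Pi.smul_apply, smul_eq_mul]
        by_cases hj : (j:ℕ) = 0 <;> simp [vA1, bb0, bb1, hj, rA] <;> decide
      have e3 : dA 0 vA1 = (16:ℤ) • vA0 := by
        funext j
        simp only [dA, Matrix.mulVecLin_apply, Matrix.mulVec, dotProduct, Matrix.of_apply,
          Pi.smul_apply, smul_eq_mul]
        simp [vA1, vA0, rA] <;> decide
      have h1 := congrFun (LinearMap.congr_fun (hT (0+1)) vB2) j0
      have h2 := congrFun (LinearMap.congr_fun (hU 0) vA1) j0
      simp only [LinearMap.comp_apply, LinearMap.add_apply, LinearMap.sub_apply, Pi.add_apply,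
        Pi.sub_apply] at h1 h2
      rw [e1, map_smul] at h1
      rw [e2, map_add, map_smul, e3, map_smul] at h2
      have c1 : hm (0+1+1) (gm (0+1+1) vB2) j0 = 16 := by
        simp only [hm, gm, Matrix.mulVecLin_apply, Matrix.mulVec, dotProduct, Matrix.of_apply]
        simp [vB2, rB, rC] <;> decide
      have c2 : dD (0+1+1) (T (0+1+1) vB2) j0 = 0 := by
        simp only [dD, Matrix.mulVecLin_apply, Matrix.mulVec, dotProduct, Matrix.of_apply]
        simp
      have c3 : dD (0+1+1) (U (0+1) vA1) j0 = 0 := by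
        simp only [dD, Matrix.mulVecLin_apply, Matrix.mulVec, dotProduct, Matrix.of_apply]
        simp
      obtain ⟨s, c4⟩ : ∃ s : ℤ, hm (0+1+1) (S (0+1) vA1) j0 = 2 * s := by
        refine ⟨(S (0+1) vA1) ⟨0, by norm_num [rC]⟩, ?_⟩
        simp only [hm, Matrix.mulVecLin_apply, Matrix.mulVec, dotProduct, Matrix.of_apply]
        exact Fintype.sum_eq_single _ (fun i hi => absurd (Fin.ext (by have := i.isLt; have h : rC (0+1+1) = 1 := (by decide); simp only [Fin.val_mk]; omega)) hi)
      rw [c1, c2] at h1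
      rw [c3, c4] at h2
      simp only [Pi.add_apply, Pi.smul_apply, smul_eq_mul] at h1 h2
      omega
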